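/- Let ℓ ≥ 1, k ≥ 1, let G be a K_{ℓ,ℓ}-free finite simple graph, and let I and J be independent sets of G of size k. Let X be a set of vertices with I ∪ J ⊆ X, and let C be a set of vertices disjoint from X with |C| ≥ k·ℓ·(4k)^ℓ such that there is a vertex x ∈ X for which no vertex of X ∖ {x} has a neighbor in C. Then I can be TJ-transformed into J. -/

import Mathlib

/-- `G` is `K_{ℓ,ℓ}`-free: there are no two disjoint sets of vertices `A, B` of size `ℓ`
with every vertex of `A` adjacent to every vertex of `B`. -/
def KllFree {V : Type*} [DecidableEq V] (G : SimpleGraph V) (ℓ : ℕ) : Prop :=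
  ¬ ∃ A B : Finset V, Disjoint A B ∧ A.card = ℓ ∧ B.card = ℓ ∧
      ∀ a ∈ A, ∀ b ∈ B, G.Adj a b

/-- `I` is an independent set of `G`: its vertices are pairwise non-adjacent. -/
def IsIndep {V : Type*} (G : SimpleGraph V) (I : Finset V) : Prop :=
  ∀ a ∈ I, ∀ b ∈ I, a ≠ b → ¬ G.Adj a b

/-- Two independent sets of size `k` are TJ-adjacent if the second is obtained from the
first by replacing one vertex `u ∈ I` by a vertex `v ∉ I`. -/
def TJStep {V : Type*} [DecidableEq V] (G : SimpleGraph V) (k : ℕ) (I J : Finset V) : Prop :=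
  IsIndep G I ∧ IsIndep G J ∧ I.card = k ∧ J.card = k ∧
    ∃ u ∈ I, ∃ v, v ∉ I ∧ J = insert v (I.erase u)

/-- `I` can be TJ-transformed into `J`: there is a finite sequence of independent sets of
size `k`, starting at `I` and ending at `J`, in which consecutive sets are TJ-adjacent. -/
def TJReach {V : Type*} [DecidableEq V] (G : SimpleGraph V) (k : ℕ) (I J : Finset V) : Prop :=
  Relation.ReflTransGen (TJStep G k) I J

open Finset

section Aux

variable {V : Type*} [DecidableEq V]

/-- Greedy extraction of an independent set in a bounded-degree finset. -/
lemma greedy_indep (G : SimpleGraph V) [DecidableRel G.Adj] (Δ : ℕ) (hΔ : 1 ≤ Δ) :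
    ∀ (k : ℕ) (C : Finset V),
      (∀ v ∈ C, (C.filter (fun w => G.Adj v w)).card < Δ) → Δ * k ≤ C.card →
      ∃ I, I ⊆ C ∧ I.card = k ∧ IsIndep G I := by
  intro k
  induction k with
  | zero =>
    intro C _ _
    exact ⟨∅, empty_subset _, card_empty, fun a ha => absurd ha (notMem_empty a)⟩
  | succ k ih =>
    intro C hdeg hcard
    have hC : 0 < C.card := lt_of_lt_of_le (by positivity) hcard
    obtain ⟨v, hv⟩ := card_pos.mp hC
    set N : Finset V := insert v (C.filter (fun w => G.Adj v w)) with hN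
    have hNcard : N.card ≤ Δ := by
      calc N.card ≤ (C.filter (fun w => G.Adj v w)).card + 1 := card_insert_le _ _
        _ ≤ Δ := by have := hdeg v hv; omega
    have hsub : C ⊆ (C \ N) ∪ N := by
      intro y hy
      by_cases hyN : y ∈ N
      · exact mem_union_right _ hyN
      · exact mem_union_left _ (mem_sdiff.mpr ⟨hy, hyN⟩)
    have hcard2 : Δ * k ≤ (C \ N).card := by
      have h1 : C.card ≤ (C \ N).card + N.card :=
        le_trans (card_le_card hsub) (card_union_le _ _)
      have : Δ * (k + 1) = Δ * k + Δ := by ring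
      omega
    have hdeg2 : ∀ u ∈ C \ N, ((C \ N).filter (fun w => G.Adj u w)).card < Δ := by
      intro u hu
      have h1 : (C \ N).filter (fun w => G.Adj u w) ⊆ C.filter (fun w => G.Adj u w) :=
        filter_subset_filter _ (sdiff_subset)
      exact lt_of_le_of_lt (card_le_card h1) (hdeg u (mem_sdiff.mp hu).1)
    obtain ⟨I', hI'sub, hI'card, hI'ind⟩ := ih (C \ N) hdeg2 hcard2
    have hvI' : v ∉ I' := fun h => (mem_sdiff.mp (hI'sub h)).2 (mem_insert_self _ _)
    refine ⟨insert v I', ?_, ?_, ?_⟩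
    · exact insert_subset hv (hI'sub.trans sdiff_subset)
    · rw [card_insert_of_notMem hvI', hI'card]
    · intro a ha b hb hab
      rcases mem_insert.mp ha with rfl | ha'
      · rcases mem_insert.mp hb with rfl | hb'
        · exact absurd rfl hab
        · intro hadj
          have hbC : b ∈ C \ N := hI'sub hb'
          exact (mem_sdiff.mp hbC).2
            (mem_insert_of_mem (mem_filter.mpr ⟨(mem_sdiff.mp hbC).1, hadj⟩))
      · rcases mem_insert.mp hb with rfl | hb'
        · intro hadj
          have haC : a ∈ C \ N := hI'sub ha'
          exact (mem_sdiff.mp haC).2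
            (mem_insert_of_mem (mem_filter.mpr ⟨(mem_sdiff.mp haC).1, hadj.symm⟩))
        · exact hI'ind a ha' b hb' hab

/-- If `C` carries no complete bipartite `(a,b)` pair and is large enough, it
contains an independent set of size `k`. -/
lemma exists_indep_of_free (G : SimpleGraph V) [DecidableRel G.Adj] :
    ∀ (b : ℕ), 1 ≤ b → ∀ (a k : ℕ), 1 ≤ a → 1 ≤ k → ∀ C : Finset V,
      (∀ A B : Finset V, A ⊆ C → B ⊆ C → Disjoint A B → A.card = a → B.card = b →
        ¬ ∀ p ∈ A, ∀ q ∈ B, G.Adj p q) →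
      a * k ^ b ≤ C.card → ∃ I, I ⊆ C ∧ I.card = k ∧ IsIndep G I := by
  intro b hb
  induction b, hb using Nat.le_induction with
  | base =>
    intro a k ha hk C hfree hcard
    have hdeg : ∀ v ∈ C, (C.filter (fun w => G.Adj v w)).card < a := by
      intro v hv
      by_contra h
      push_neg at h
      obtain ⟨A, hAsub, hAcard⟩ := Finset.exists_subset_card_eq h
      have hvA : v ∉ A := fun hvA => G.irrefl (mem_filter.mp (hAsub hvA)).2
      refine hfree A {v} (hAsub.trans (filter_subset _ _)) (singleton_subset_iff.mpr hv)
        (disjoint_singleton_right.mpr hvA) hAcard (card_singleton v) ?_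
      intro p hp q hq
      rw [mem_singleton.mp hq]
      exact ((mem_filter.mp (hAsub hp)).2).symm
    have : a * k ^ 1 = a * k := by ring
    exact greedy_indep G a ha k C hdeg (by omega)
  | succ b hb ih =>
    intro a k ha hk C hfree hcard
    by_cases hbig : ∃ v ∈ C, a * k ^ b ≤ (C.filter (fun w => G.Adj v w)).card
    · obtain ⟨v, hv, hdeg⟩ := hbig
      set C₂ : Finset V := C.filter (fun w => G.Adj v w) with hC₂
      have hfree₂ : ∀ A B : Finset V, A ⊆ C₂ → B ⊆ C₂ → Disjoint A B → A.card = a →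
          B.card = b → ¬ ∀ p ∈ A, ∀ q ∈ B, G.Adj p q := by
        intro A B hA hB hdisj hAc hBc hall
        have hvB : v ∉ B := fun h => G.irrefl (mem_filter.mp (hB h)).2
        have hvA : v ∉ A := fun h => G.irrefl (mem_filter.mp (hA h)).2
        refine hfree A (insert v B) (hA.trans (filter_subset _ _))
          (insert_subset hv (hB.trans (filter_subset _ _)))
          (disjoint_insert_right.mpr ⟨hvA, hdisj⟩) hAc
          (by rw [card_insert_of_notMem hvB, hBc]) ?_
        intro p hp q hq
        rcases mem_insert.mp hq with rfl | hq'
        · exact ((mem_filter.mp (hA hp)).2).symm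
        · exact hall p hp q hq'
      obtain ⟨I, hIsub, hIcard, hIind⟩ := ih a k ha hk C₂ hfree₂ hdeg
      exact ⟨I, hIsub.trans (filter_subset _ _), hIcard, hIind⟩
    · push_neg at hbig
      have hΔ : 1 ≤ a * k ^ b := Nat.mul_pos ha (pow_pos hk b)
      have hcard' : (a * k ^ b) * k ≤ C.card := by
        have : a * k ^ (b + 1) = (a * k ^ b) * k := by ring
        omega
      exact greedy_indep G (a * k ^ b) hΔ k C hbig hcard'

lemma tjstep_symm {G : SimpleGraph V} {k : ℕ} {S T : Finset V}
    (h : TJStep G k S T) : TJStep G k T S := by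
  obtain ⟨hS, hT, hcS, hcT, u, hu, v, hv, rfl⟩ := h
  refine ⟨hT, hS, hcT, hcS, v, mem_insert_self _ _, u, ?_, ?_⟩
  · intro hmem
    rcases mem_insert.mp hmem with rfl | h'
    · exact hv hu
    · exact (notMem_erase u S) h'
  · have hvS : v ∉ S.erase u := fun h => hv (mem_of_mem_erase h)
    rw [Finset.erase_insert hvS, Finset.insert_erase hu]

lemma indep_union {G : SimpleGraph V} {E D : Finset V}
    (hE : IsIndep G E) (hD : IsIndep G D)
    (hcross : ∀ a ∈ E, ∀ b ∈ D, ¬ G.Adj a b)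
    {A B : Finset V} (hA : A ⊆ E) (hB : B ⊆ D) : IsIndep G (A ∪ B) := by
  intro a ha b hb hab
  rcases mem_union.mp ha with ha' | ha' <;> rcases mem_union.mp hb with hb' | hb'
  · exact hE a (hA ha') b (hA hb') hab
  · exact hcross a (hA ha') b (hB hb')
  · exact fun hadj => hcross b (hA hb') a (hB ha') hadj.symm
  · exact hD a (hB ha') b (hB hb') hab

/-- Walk from any mixed set `A ∪ B` (with `A ⊆ E` and `B ⊆ D`) to `D`. -/
lemma path_to {G : SimpleGraph V} {k : ℕ} {D E : Finset V}
    (hD : IsIndep G D) (hDk : D.card = k) (hE : IsIndep G E)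
    (hcross : ∀ a ∈ E, ∀ b ∈ D, ¬ G.Adj a b) (hdisj : Disjoint E D) :
    ∀ A B : Finset V, A ⊆ E → B ⊆ D → A.card + B.card = k → TJReach G k (A ∪ B) D := by
  intro A
  induction A using Finset.strongInduction with
  | _ A ih =>
    intro B hA hB hcard
    rcases A.eq_empty_or_nonempty with rfl | ⟨a, ha⟩
    · have hBD : B = D := by
        apply Finset.eq_of_subset_of_card_le hB
        simp only [card_empty, Nat.zero_add] at hcard
        omega
      rw [empty_union, hBD]
      exact Relation.ReflTransGen.refl
    · have hApos : 0 < A.card := card_pos.mpr ⟨a, ha⟩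
      have hBlt : B.card < k := by omega
      have hex : ∃ b ∈ D, b ∉ B := by
        by_contra h
        push_neg at h
        have := card_le_card (fun y hy => h y hy)
        omega
      obtain ⟨b, hbD, hbB⟩ := hex
      have haE : a ∈ E := hA ha
      have haB : a ∉ B := fun h => Finset.disjoint_left.mp hdisj haE (hB h)
      have hbA : b ∉ A := fun h => Finset.disjoint_left.mp hdisj (hA h) hbD
      have hdisjAB : Disjoint A B := hdisj.mono hA hB
      have hA' : A.erase a ⊆ E := (erase_subset a A).trans hA
      have hB' : insert b B ⊆ D := insert_subset hbD hB
      have hcard' : (A.erase a).card + (insert b B).card = k := by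
        rw [card_erase_of_mem ha, card_insert_of_notMem hbB]
        omega
      have hcardAB : (A ∪ B).card = k := by
        rw [card_union_of_disjoint hdisjAB]; exact hcard
      have hcard'' : (A.erase a ∪ insert b B).card = k := by
        rw [card_union_of_disjoint (hdisj.mono hA' hB')]; exact hcard'
      have heq : A.erase a ∪ insert b B = insert b ((A ∪ B).erase a) := by
        rw [Finset.erase_union_distrib, Finset.erase_eq_of_notMem haB,
          Finset.union_insert]

      have hstep : TJStep G k (A ∪ B) (A.erase a ∪ insert b B) := by
        refine ⟨indep_union hE hD hcross hA hB, indep_union hE hD hcross hA' hB',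
          hcardAB, hcard'', a, mem_union_left _ ha, b, ?_, heq⟩
        intro hmem
        rcases mem_union.mp hmem with h' | h'
        · exact hbA h'
        · exact hbB h'
      exact Relation.ReflTransGen.head hstep
        (ih (A.erase a) (erase_ssubset ha) (insert b B) hA' hB' hcard')

end Aux

theorem big_class_of_rank_le_one {V : Type*} [Fintype V] [DecidableEq V]
    (G : SimpleGraph V) (ℓ k : ℕ) (hℓ : 1 ≤ ℓ) (hk : 1 ≤ k) (hfree : KllFree G ℓ)
    (I J : Finset V) (hI : IsIndep G I) (hJ : IsIndep G J)
    (hIcard : I.card = k) (hJcard : J.card = k)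
    (X C : Finset V) (hIJX : I ∪ J ⊆ X) (hCX : Disjoint C X)
    (hCcard : k * ℓ * (4 * k) ^ ℓ ≤ C.card)
    (x : V) (hx : x ∈ X)
    (hrank : ∀ y ∈ X, y ≠ x → ∀ c ∈ C, ¬ G.Adj y c) :
    TJReach G k I J := by
  classical
  -- find an independent set D of size k inside C
  have hsize : ℓ * k ^ ℓ ≤ C.card := by
    have h1 : k ^ ℓ ≤ (4 * k) ^ ℓ := Nat.pow_le_pow_left (by omega) ℓ
    have h2 : ℓ * k ^ ℓ ≤ ℓ * (4 * k) ^ ℓ := Nat.mul_le_mul_left _ h1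
    have h3 : ℓ * (4 * k) ^ ℓ ≤ k * ℓ * (4 * k) ^ ℓ := by
      have : ℓ ≤ k * ℓ := Nat.le_mul_of_pos_left _ hk
      exact Nat.mul_le_mul_right _ this
    omega
  obtain ⟨D, hDC, hDk, hDind⟩ :=
    exists_indep_of_free G ℓ hℓ ℓ k hℓ hk C
      (fun A B hA hB hd hAc hBc hall => hfree ⟨A, B, hd, hAc, hBc, hall⟩) hsize
  -- general helper: for any independent set K ⊆ X of size k, TJReach K D
  have main : ∀ K : Finset V, IsIndep G K → K.card = k → K ⊆ X → TJReach G k K D := by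
    intro K hKind hKcard hKX
    have hEind : IsIndep G (K.erase x) := fun a ha b hb hab =>
      hKind a (mem_of_mem_erase ha) b (mem_of_mem_erase hb) hab
    have hcross : ∀ a ∈ K.erase x, ∀ b ∈ D, ¬ G.Adj a b := by
      intro a ha b hb
      exact hrank a (hKX (mem_of_mem_erase ha)) (ne_of_mem_erase ha) b (hDC hb)
    have hdisj : Disjoint (K.erase x) D :=
      (hCX.symm.mono ((erase_subset x K).trans hKX) hDC)
    by_cases hxK : x ∈ K
    · have hDne : D.Nonempty := card_pos.mp (by omega)
      obtain ⟨d, hd⟩ := hDne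
      have hdX : d ∉ X := Finset.disjoint_left.mp hCX (hDC hd)
      have hdK : d ∉ K := fun h => hdX (hKX h)
      have hdE : d ∉ K.erase x := fun h => hdK (mem_of_mem_erase h)
      have hcard1 : (insert d (K.erase x)).card = k := by
        rw [card_insert_of_notMem hdE, card_erase_of_mem hxK]
        omega
      have hind1 : IsIndep G (insert d (K.erase x)) := by
        have := indep_union hEind hDind hcross (A := K.erase x) (B := {d})
          (Finset.Subset.refl _) (singleton_subset_iff.mpr hd)
        rwa [Finset.union_comm, ← Finset.insert_eq] at this
      have hstep : TJStep G k K (insert d (K.erase x)) :=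
        ⟨hKind, hind1, hKcard, hcard1, x, hxK, d, hdK, rfl⟩
      have hrest : TJReach G k ((K.erase x) ∪ {d}) D :=
        path_to hDind hDk hEind hcross hdisj (K.erase x) {d}
          (Finset.Subset.refl _) (singleton_subset_iff.mpr hd)
          (by rw [card_erase_of_mem hxK, card_singleton]; omega)
      rw [Finset.union_comm, ← Finset.insert_eq] at hrest
      exact Relation.ReflTransGen.head hstep hrest
    · have hKE : K ⊆ K.erase x := by
        rw [Finset.erase_eq_of_notMem hxK]
      have := path_to hDind hDk hEind hcross hdisj K ∅ hKE (empty_subset _)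
        (by rw [card_empty]; omega)
      rwa [Finset.union_empty] at this
  have hID : TJReach G k I D := main I hI hIcard ((subset_union_left).trans hIJX)
  have hJD : TJReach G k J D := main J hJ hJcard ((subset_union_right).trans hIJX)
  exact hID.trans (letI : Std.Symm (TJStep G k) := ⟨fun _ _ h => tjstep_symm h⟩; Relation.ReflTransGen.symmetric.symm _ _ hJD)
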